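/- Let Y be a paracompact space, A ⊆ Y closed, and K a compact subset of a normed space V. For every continuous h : Y → V, continuous η : Y → (0,∞), and every continuous g : A → V satisfying ‖g(a) − h(a)‖ < η(a)/2 for all a ∈ A, with g and h taking values in a fixed closed convex subset Q of V, there exists a continuous extension g̃ : Y → Q of g with ‖g̃(y) − h(y)‖ ≤ η(y)/2 for all y ∈ Y. (Proved via the Michael selection theorem applied to the lower semicontinuous convex-valued map Φ(y) = closed ball of radius η(y)/2 around h(y) intersected with Q for y ∉ A, and Φ(y) = {g(y)} for y ∈ A.) -/

import Mathlib

open Set Filter Topology Metric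

/-- One step of the Michael-selection-style iteration: given a continuous map `u` with
values in `Q`, within `η/2` of `h`, and within `ε` of `g` on `A`, we produce a new map
within `δ` of `g` on `A`, moving by at most `2 * ε`. -/
lemma michael_step {Y V : Type} [TopologicalSpace Y] [ParacompactSpace Y] [T2Space Y]
    [NormedAddCommGroup V] [NormedSpace ℝ V]
    {A : Set Y} (hA : IsClosed A)
    {Q : Set V} (hQ_conv : Convex ℝ Q)
    (h : C(Y, V)) (η : C(Y, ℝ))
    (g : C(A, V)) (hgQ : ∀ a : A, g a ∈ Q)
    (hgh : ∀ a : A, ‖g a - h a‖ < η a / 2)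
    (ε : Y → ℝ) (hεc : Continuous ε) (hε : ∀ y, 0 < ε y) (δ : ℝ) (hδ : 0 < δ)
    (u : C(Y, V)) (hu1 : ∀ y, u y ∈ Q) (hu2 : ∀ y, ‖u y - h y‖ ≤ η y / 2)
    (hu3 : ∀ a : A, ‖u a - g a‖ < ε a) :
    ∃ v : C(Y, V), (∀ y, v y ∈ Q) ∧ (∀ y, ‖v y - h y‖ ≤ η y / 2) ∧
      (∀ a : A, ‖v a - g a‖ ≤ δ) ∧ (∀ y, ‖v y - u y‖ ≤ 2 * ε y) := by
  set t : Y → Set V := fun y =>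
    Q ∩ closedBall (h y) (η y / 2) ∩ closedBall (u y) (2 * ε y) ∩
      ⋂ (hy : y ∈ A), closedBall (g ⟨y, hy⟩) δ with ht
  have htconv : ∀ y, Convex ℝ (t y) := fun y =>
    (((hQ_conv.inter (convex_closedBall _ _)).inter (convex_closedBall _ _)).inter
      (convex_iInter fun _ => convex_closedBall _ _))
  have H : ∀ x : Y, ∃ U ∈ 𝓝 x, ∃ f : Y → V, ContinuousOn f U ∧ ∀ y ∈ U, f y ∈ t y := by
    intro x
    by_cases hx : x ∈ A
    · -- near a point of `A`, the constant `g x` works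
      have hSopen : IsOpen ((fun a : A => g a) ⁻¹' Metric.ball (g ⟨x, hx⟩) δ) :=
        g.continuous.isOpen_preimage _ Metric.isOpen_ball
      obtain ⟨O, hO, hOS⟩ := isOpen_induced_iff.1 hSopen
      set U : Set Y := O ∩ {y | ‖g ⟨x, hx⟩ - h y‖ < η y / 2} ∩
        {y | ‖g ⟨x, hx⟩ - u y‖ < 2 * ε y} with hU
      have hUopen : IsOpen U := by
        refine (hO.inter (isOpen_lt ?_ ?_)).inter (isOpen_lt ?_ ?_)
        · exact (continuous_const.sub h.continuous).norm
        · exact η.continuous.div_const 2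
        · exact (continuous_const.sub u.continuous).norm
        · exact continuous_const.mul hεc
      have hxU : x ∈ U := by
        refine ⟨⟨?_, hgh ⟨x, hx⟩⟩, ?_⟩
        · have : (⟨x, hx⟩ : A) ∈ Subtype.val ⁻¹' O := by
            rw [hOS]; simp [Metric.mem_ball, hδ]
          exact this
        · have := hu3 ⟨x, hx⟩
          calc ‖g ⟨x, hx⟩ - u x‖ = ‖u x - g ⟨x, hx⟩‖ := norm_sub_rev _ _
            _ < ε x := this
            _ < 2 * ε x := by linarith [hε x]
      refine ⟨U, hUopen.mem_nhds hxU, fun _ => g ⟨x, hx⟩, continuousOn_const, ?_⟩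
      rintro y ⟨⟨hyO, hy1⟩, hy2⟩
      refine ⟨⟨⟨hgQ _, ?_⟩, ?_⟩, ?_⟩
      · exact mem_closedBall_iff_norm.2 hy1.le
      · exact mem_closedBall_iff_norm.2 hy2.le
      · refine mem_iInter.2 fun hyA => ?_
        have : (⟨y, hyA⟩ : A) ∈ Subtype.val ⁻¹' O := hyO
        rw [hOS] at this
        have : dist (g ⟨y, hyA⟩) (g ⟨x, hx⟩) < δ := this
        rw [mem_closedBall_iff_norm, ← dist_eq_norm, dist_comm]
        exact this.le
    · -- away from `A`, the function `u` itself works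
      refine ⟨Aᶜ, hA.isOpen_compl.mem_nhds hx, u, u.continuous.continuousOn, ?_⟩
      intro y hy
      refine ⟨⟨⟨hu1 y, mem_closedBall_iff_norm.2 (hu2 y)⟩, ?_⟩, ?_⟩
      · rw [mem_closedBall_iff_norm, sub_self, norm_zero]
        linarith [hε y]
      · exact mem_iInter.2 fun hyA => absurd hyA hy
  obtain ⟨v, hv⟩ := exists_continuous_forall_mem_convex_of_local htconv H
  refine ⟨v, fun y => (hv y).1.1.1, fun y => mem_closedBall_iff_norm.1 (hv y).1.1.2,
    fun a => ?_, fun y => mem_closedBall_iff_norm.1 (hv y).1.2⟩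
  have := mem_iInter.1 (hv a).2 a.2
  rw [mem_closedBall_iff_norm] at this
  exact this

theorem stmt_7 (Y V : Type) [TopologicalSpace Y] [ParacompactSpace Y] [T2Space Y]
    [NormedAddCommGroup V] [NormedSpace ℝ V] [CompleteSpace V]
    (A : Set Y) (hA : IsClosed A)
    (K : Set V) (hK : IsCompact K)
    (Q : Set V) (hQ_closed : IsClosed Q) (hQ_conv : Convex ℝ Q) (hQ_ne : Q.Nonempty)
    (h : C(Y, V)) (hhQ : ∀ y : Y, h y ∈ Q)
    (η : C(Y, ℝ)) (hη : ∀ y : Y, 0 < η y)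
    (g : C(A, V)) (hgQ : ∀ a : A, g a ∈ Q)
    (hgh : ∀ a : A, ‖g a - h a‖ < η a / 2) :
    ∃ gt : C(Y, V), (∀ y : Y, gt y ∈ Q) ∧ (∀ a : A, gt a = g a) ∧
      ∀ y : Y, ‖gt y - h y‖ ≤ η y / 2 := by
  classical
  set P : ℕ → C(Y, V) → Prop := fun n u =>
    (∀ y, u y ∈ Q) ∧ (∀ y, ‖u y - h y‖ ≤ η y / 2) ∧
      (∀ a : A, ‖u a - g a‖ < (1/2 : ℝ) ^ n) with hP
  -- base map
  obtain ⟨w0, hw01, hw02, hw03, -⟩ :=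
    michael_step hA hQ_conv h η g hgQ hgh (fun y => η y / 2) (η.continuous.div_const 2)
      (fun y => half_pos (hη y)) (1/2) (by norm_num) h hhQ
      (fun y => by simp [half_pos (hη y) |>.le, le_of_lt (half_pos (hη y))])
      (fun a => by rw [norm_sub_rev]; exact hgh a)
  have hP0 : P 0 w0 := ⟨hw01, hw02, fun a => by
    have := hw03 a; simpa using lt_of_le_of_lt this (by norm_num)⟩
  -- inductive step
  have step : ∀ n (u : C(Y, V)), P n u →
      ∃ v : C(Y, V), P (n + 1) v ∧ ∀ y, ‖v y - u y‖ ≤ 2 * (1/2 : ℝ) ^ n := by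
    intro n u hu
    obtain ⟨v, hv1, hv2, hv3, hv4⟩ :=
      michael_step hA hQ_conv h η g hgQ hgh (fun _ => (1/2 : ℝ) ^ n) continuous_const
        (fun _ => by positivity) ((1/2 : ℝ) ^ (n + 1) / 2) (by positivity)
        u hu.1 hu.2.1 hu.2.2
    exact ⟨v, ⟨hv1, hv2, fun a => lt_of_le_of_lt (hv3 a) (by
      have : (0:ℝ) < (1/2 : ℝ) ^ (n+1) := by positivity
      linarith)⟩, hv4⟩
  choose F hF hF' using step
  let W : ∀ n : ℕ, {u : C(Y, V) // P n u} := fun n =>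
    Nat.rec ⟨w0, hP0⟩ (fun n p => ⟨F n p.1 p.2, hF n p.1 p.2⟩) n
  set w : ℕ → C(Y, V) := fun n => (W n).1 with hwdef
  have hwP : ∀ n, P n (w n) := fun n => (W n).2
  have hwd : ∀ n, ∀ y, ‖w (n + 1) y - w n y‖ ≤ 2 * (1/2 : ℝ) ^ n := fun n =>
    hF' n (W n).1 (W n).2
  -- the sequence is pointwise Cauchy with geometric control
  have hdist : ∀ y n, dist (w n y) (w (n + 1) y) ≤ 2 * (1/2 : ℝ) ^ n := by
    intro y n
    rw [dist_eq_norm, norm_sub_rev]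
    exact hwd n y
  have hcauchy : ∀ y, CauchySeq fun n => w n y := fun y =>
    cauchySeq_of_le_geometric (1/2) 2 (by norm_num) (hdist y)
  choose L hL using fun y => cauchySeq_tendsto_of_complete (hcauchy y)
  have hLd : ∀ y n, dist (w n y) (L y) ≤ 2 * (1/2 : ℝ) ^ n / (1 - 1/2) :=
    fun y => dist_le_of_le_geometric_of_tendsto (1/2) 2 (by norm_num) (hdist y) (hL y)
  -- uniform convergence gives continuity of the limit
  have hTU : TendstoUniformly (fun n y => w n y) L atTop := by
    rw [Metric.tendstoUniformly_iff]
    intro e he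
    obtain ⟨N, hN⟩ := exists_pow_lt_of_lt_one (show (0:ℝ) < e / 4 by linarith) (by norm_num : (1/2 : ℝ) < 1)
    refine eventually_atTop.2 ⟨N, fun n hn y => ?_⟩
    have h1 : dist (w n y) (L y) ≤ 4 * (1/2 : ℝ) ^ n := by
      have h0 := hLd y n
      rw [show 2 * (1/2 : ℝ) ^ n / (1 - 1/2) = 4 * (1/2 : ℝ) ^ n by ring] at h0
      exact h0
    have h2 : (1/2 : ℝ) ^ n ≤ (1/2 : ℝ) ^ N :=
      pow_le_pow_of_le_one (by norm_num) (by norm_num) hn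
    rw [dist_comm]
    calc dist (w n y) (L y) ≤ 4 * (1/2 : ℝ) ^ n := h1
      _ ≤ 4 * (1/2 : ℝ) ^ N := by linarith
      _ < 4 * (e / 4) := by linarith [hN]
      _ = e := by ring
  have hLc : Continuous L :=
    hTU.continuous (Eventually.of_forall (f := atTop) fun n => (w n).continuous).frequently
  refine ⟨⟨L, hLc⟩, fun y => ?_, fun a => ?_, fun y => ?_⟩
  · exact hQ_closed.mem_of_tendsto (hL y) (Eventually.of_forall fun n => (hwP n).1 y)
  · -- `L` agrees with `g` on `A`
    have htend : Tendsto (fun n => w n (a : Y)) atTop (𝓝 (g a)) := by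
      rw [tendsto_iff_dist_tendsto_zero]
      have hsq : ∀ n, dist (w n (a : Y)) (g a) ≤ (1/2 : ℝ) ^ n := fun n => by
        rw [dist_eq_norm]; exact ((hwP n).2.2 a).le
      exact squeeze_zero (fun n => dist_nonneg) hsq
        (tendsto_pow_atTop_nhds_zero_of_lt_one (by norm_num) (by norm_num))
    exact tendsto_nhds_unique (hL a) htend
  · -- the norm bound passes to the limit
    have htend : Tendsto (fun n => ‖w n y - h y‖) atTop (𝓝 ‖L y - h y‖) :=
      ((hL y).sub tendsto_const_nhds).norm
    exact le_of_tendsto' htend fun n => (hwP n).2.1 y
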